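/- For k ≥ 1, the derivation ε_{2k} of the free Lie algebra on a, b determined by ε_{2k}(a) = (2/(2k-2)!)·ad(a)^{2k}(b) and ε_{2k}(b) = (2/(2k-2)!)·Σ_{0 ≤ j < k} (-1)^j [ad(a)^j(b), ad(a)^{2k-1-j}(b)] annihilates [a,b]. -/

import Mathlib

noncomputable section

/-- The free Lie algebra over ℚ on two generators. -/
abbrev L : Type := FreeLieAlgebra ℚ Bool

/-- The generator `a`. -/
def ga : L := FreeLieAlgebra.of ℚ true
/-- The generator `b`. -/
def gb : L := FreeLieAlgebra.of ℚ false

/-- `D¹L = [L, L]`, the commutator ideal. -/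
def D1 : LieIdeal ℚ L := ⁅(⊤ : LieIdeal ℚ L), (⊤ : LieIdeal ℚ L)⁆
/-- `D²L = [[L,L],[L,L]]`, the double commutator. -/
def D2 : LieIdeal ℚ L := ⁅D1, D1⁆

/-- Iterated adjoint action: `adp x k y = ad(x)^k (y)`. -/
def adp (x : L) (k : ℕ) (y : L) : L := ((LieAlgebra.ad ℚ L x) ^ k) y

lemma adp_succ (x : L) (j : ℕ) (y : L) : ⁅x, adp x j y⁆ = adp x (j + 1) y := by
  simp [adp, pow_succ']

lemma adp_zero (x : L) (y : L) : adp x 0 y = y := rfl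

/-- Tsunogai's derivation `ε_{2k}` (k ≥ 1), determined on generators by
`ε_{2k}(a) = (2/(2k-2)!) ad(a)^{2k}(b)` and
`ε_{2k}(b) = (2/(2k-2)!) Σ_{0 ≤ j < k} (-1)^j [ad(a)^j(b), ad(a)^{2k-1-j}(b)]`,
annihilates `[a,b]`: `[ε_{2k}(a), b] + [a, ε_{2k}(b)] = 0`. -/
theorem tsunogai_derivation_annihilates_bracket (k : ℕ) (hk : 1 ≤ k) :
    ⁅(2 / (Nat.factorial (2 * k - 2) : ℚ)) • adp ga (2 * k) gb, gb⁆ +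
      ⁅ga, (2 / (Nat.factorial (2 * k - 2) : ℚ)) •
        ∑ j ∈ Finset.range k,
          ((-1 : ℚ)) ^ j • ⁅adp ga j gb, adp ga (2 * k - 1 - j) gb⁆⁆ = 0 := by
  set c : ℚ := 2 / (Nat.factorial (2 * k - 2) : ℚ)
  set A : ℕ → L := fun j => ⁅adp ga j gb, adp ga (2 * k - j) gb⁆ with hA
  have key : ∀ j ∈ Finset.range k,
      ((-1 : ℚ)) ^ j • ⁅ga, ⁅adp ga j gb, adp ga (2 * k - 1 - j) gb⁆⁆ =
        (fun i => ((-1 : ℚ)) ^ i • A i) j - (fun i => ((-1 : ℚ)) ^ i • A i) (j + 1) := by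
    intro j hj
    simp only [Finset.mem_range] at hj
    have h1 : 2 * k - 1 - j + 1 = 2 * k - j := by omega
    have h2 : 2 * k - (j + 1) = 2 * k - 1 - j := by omega
    have : ⁅ga, ⁅adp ga j gb, adp ga (2 * k - 1 - j) gb⁆⁆ = A (j + 1) + A j := by
      rw [leibniz_lie, adp_succ, adp_succ, h1, hA]
      simp only [h2]
    rw [this, smul_add]
    simp only [pow_succ]
    module
  have hsum : ∑ j ∈ Finset.range k,
      ((-1 : ℚ)) ^ j • ⁅ga, ⁅adp ga j gb, adp ga (2 * k - 1 - j) gb⁆⁆ = A 0 := by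
    rw [Finset.sum_congr rfl key, Finset.sum_range_sub']
    have hAk : A k = 0 := by
      have : 2 * k - k = k := by omega
      simp [hA, this]
    simp [hAk]
  have hA0 : A 0 = ⁅gb, adp ga (2 * k) gb⁆ := by simp [hA, adp_zero]
  rw [smul_lie, lie_smul]
  have hlie : ⁅ga, ∑ j ∈ Finset.range k,
      ((-1 : ℚ)) ^ j • ⁅adp ga j gb, adp ga (2 * k - 1 - j) gb⁆⁆ =
      ∑ j ∈ Finset.range k,
      ((-1 : ℚ)) ^ j • ⁅ga, ⁅adp ga j gb, adp ga (2 * k - 1 - j) gb⁆⁆ := by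
    rw [show ∀ x : L, ⁅ga, x⁆ = LieAlgebra.ad ℚ L ga x from fun _ => rfl, map_sum]
    simp [LieAlgebra.ad_apply]
  rw [hlie, hsum, hA0]
  have hskew : (⁅gb, adp ga (2 * k) gb⁆ : L) = -⁅adp ga (2 * k) gb, gb⁆ :=
    (lie_skew gb (adp ga (2 * k) gb)).symm
  rw [hskew, smul_neg]
  abel
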